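/- Minimum value of Nesterov's hard function with unit parameters: for L(θ) as above with a > 0 and b = c = d = 1, the minimum value is L(θ*) = (a/8)(−1 + 1/(n+1)) = −(a/8)·n/(n+1). -/

import Mathlib

noncomputable def Gfun (n : ℕ) (θ : Fin n → ℝ) (i : ℕ) : ℝ :=
  if hi : i < n then θ ⟨i, hi⟩ else 0

lemma Gfun_eq (n : ℕ) (θ : Fin n → ℝ) (i : ℕ) (hi : i < n) :
    Gfun n θ i = θ ⟨i, hi⟩ := dif_pos hi

lemma sum_shift (N : ℕ) (h : ℕ → ℝ) (c : ℝ) :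
    ∑ i ∈ Finset.range N, ((h i - h (i+1)) + c)^2
      = ∑ i ∈ Finset.range N, (h i - h (i+1))^2 + 2*c*(h 0 - h N) + N * c^2 := by
  have e : ∀ i, ((h i - h (i+1)) + c)^2
      = (h i - h (i+1))^2 + 2*c*(h i - h (i+1)) + c^2 := by intro i; ring
  simp_rw [e]
  rw [Finset.sum_add_distrib, Finset.sum_add_distrib, ← Finset.mul_sum,
    Finset.sum_range_sub', Finset.sum_const, Finset.card_range, nsmul_eq_mul]

/-- Minimum value of Nesterov's hard function with `a > 0` and `b = c = d = 1`:
the minimizer `θ*ᵢ = (n-i+1)/(n+1)` (1-based) achieves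
`L(θ*) = (a/8)(-1 + 1/(n+1)) = -(a/8)·n/(n+1)`. -/
theorem stmt18 (n : ℕ) (hn : 1 ≤ n) (a : ℝ) (ha : 0 < a)
    (Lf : (Fin n → ℝ) → ℝ)
    (hLf : ∀ θ : Fin n → ℝ, Lf θ = (a / 4) *
      ((1 / 2) * ((θ ⟨0, by omega⟩) ^ 2
        + ∑ i : Fin (n - 1),
            (θ ⟨i.1, by have := i.2; omega⟩ - θ ⟨i.1 + 1, by have := i.2; omega⟩) ^ 2
        + (θ ⟨n - 1, by omega⟩) ^ 2)
      - θ ⟨0, by omega⟩))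
    (θstar : Fin n → ℝ)
    (hθstar : ∀ i : Fin n, θstar i = ((n : ℝ) - (i : ℕ)) / ((n : ℝ) + 1)) :
    (∀ θ : Fin n → ℝ, Lf θstar ≤ Lf θ) ∧
    Lf θstar = (a / 8) * (-1 + 1 / ((n : ℝ) + 1)) ∧
    (a / 8) * (-1 + 1 / ((n : ℝ) + 1)) = -(a / 8) * ((n : ℝ) / ((n : ℝ) + 1)) := by
  have hn1 : (0:ℝ) < (n:ℝ) + 1 := by positivity
  set c : ℝ := 1 / ((n:ℝ)+1) with hcdef
  have hcast : ((n-1 : ℕ) : ℝ) = (n:ℝ) - 1 := by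
    push_cast [Nat.cast_sub hn]; ring
  -- representation of Lf in terms of Gfun
  have hrep : ∀ θ : Fin n → ℝ, Lf θ = (a/4)*((1/2)*((Gfun n θ 0)^2
      + ∑ i ∈ Finset.range (n-1), (Gfun n θ i - Gfun n θ (i+1))^2
      + (Gfun n θ (n-1))^2) - Gfun n θ 0) := by
    intro θ
    have hsum : (∑ i : Fin (n - 1),
        (θ ⟨i.1, by have := i.2; omega⟩ - θ ⟨i.1 + 1, by have := i.2; omega⟩) ^ 2)
        = ∑ i ∈ Finset.range (n-1), (Gfun n θ i - Gfun n θ (i+1))^2 := by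
      rw [← Fin.sum_univ_eq_sum_range (fun i => (Gfun n θ i - Gfun n θ (i+1))^2) (n-1)]
      apply Finset.sum_congr rfl
      intro i _
      have h1 : i.1 < n := by have := i.2; omega
      rw [Gfun_eq n θ i.1 h1, Gfun_eq n θ (i.1+1) (by have := i.2; omega)]
    rw [hLf θ, hsum, Gfun_eq n θ 0 (by omega), Gfun_eq n θ (n-1) (by omega)]
  -- values of Gfun θstar
  have hGs : ∀ i, i < n → Gfun n θstar i = ((n:ℝ) - i)/((n:ℝ)+1) := by
    intro i hi
    rw [Gfun_eq n θstar i hi, hθstar]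
  have hGs0 : Gfun n θstar 0 = 1 - c := by
    rw [hGs 0 (by omega), hcdef]; field_simp; push_cast; ring
  have hGsN : Gfun n θstar (n-1) = c := by
    rw [hGs (n-1) (by omega), hcast, hcdef]; field_simp; ring
  have hGsd : ∀ i, i + 1 < n → Gfun n θstar i - Gfun n θstar (i+1) = c := by
    intro i hi
    rw [hGs i (by omega), hGs (i+1) (by omega), hcdef, div_sub_div_same]
    congr 1
    push_cast
    ring
  -- value at θstar
  have E2 : Lf θstar = (a/4)*((1/2)*((1-c)^2 + ((n:ℝ)-1)*c^2 + c^2) - (1-c)) := by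
    rw [hrep θstar, hGs0, hGsN]
    have : ∑ i ∈ Finset.range (n-1), (Gfun n θstar i - Gfun n θstar (i+1))^2
        = ((n:ℝ)-1)*c^2 := by
      rw [Finset.sum_congr rfl (fun i hi => by
        rw [hGsd i (by simp at hi; omega)]), Finset.sum_const, Finset.card_range,
        nsmul_eq_mul, hcast]
    rw [this]
  refine ⟨?_, ?_, ?_⟩
  · intro θ
    set h : ℕ → ℝ := fun i => Gfun n θ i - Gfun n θstar i with hdef
    have E1 : Lf θ = (a/4)*((1/2)*((h 0 + (1-c))^2
        + ((∑ i ∈ Finset.range (n-1), (h i - h (i+1))^2) + 2*c*(h 0 - h (n-1)) + ((n:ℝ)-1)*c^2)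
        + (h (n-1) + c)^2) - (h 0 + (1-c))) := by
      rw [hrep θ]
      have hsum2 : ∑ i ∈ Finset.range (n-1), (Gfun n θ i - Gfun n θ (i+1))^2
          = ∑ i ∈ Finset.range (n-1), ((h i - h (i+1)) + c)^2 := by
        apply Finset.sum_congr rfl
        intro i hi
        simp only [Finset.mem_range] at hi
        rw [show Gfun n θ i - Gfun n θ (i+1) = (h i - h (i+1))
          + (Gfun n θstar i - Gfun n θstar (i+1)) from by simp only [hdef]; ring,
          hGsd i (by omega)]
      rw [hsum2, sum_shift, hcast]
      have e0 : Gfun n θ 0 = h 0 + (1-c) := by simp [hdef, hGs0]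
      have eN : Gfun n θ (n-1) = h (n-1) + c := by simp [hdef, hGsN]
      rw [e0, eN]
    have hS : 0 ≤ ∑ i ∈ Finset.range (n-1), (h i - h (i+1))^2 :=
      Finset.sum_nonneg (fun i _ => sq_nonneg _)
    have key : Lf θ = Lf θstar + (a/8)*((h 0)^2
        + (∑ i ∈ Finset.range (n-1), (h i - h (i+1))^2) + (h (n-1))^2) := by
      rw [E1, E2]; ring
    rw [key]
    nlinarith [sq_nonneg (h 0), sq_nonneg (h (n-1)), ha.le, mul_nonneg (by linarith : (0:ℝ) ≤ a/8) (by nlinarith [sq_nonneg (h 0), sq_nonneg (h (n-1))] : (0:ℝ) ≤ (h 0)^2 + (∑ i ∈ Finset.range (n-1), (h i - h (i+1))^2) + (h (n-1))^2)]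
  · rw [E2, hcdef]
    field_simp
    try ring
  · rw [hcdef]; field_simp; try ring
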